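/- Let κ be a regular cardinal and P a κ-Knaster partial order. If T is a tree of height κ, then forcing with P adds no new cofinal branch to T: every cofinal branch of T in a P-generic extension is in the ground model. -/

import Mathlib

open Cardinal

universe u

/-- Two conditions are compatible if they have a common lower bound. -/
def Compat {P : Type u} [Preorder P] (a b : P) : Prop := ∃ c, c ≤ a ∧ c ≤ b

/-- A partial order is κ-Knaster if every subset of size κ has a subset of size κ
whose elements are pairwise compatible. -/
def IsKnaster (κ : Cardinal.{u}) (P : Type u) [Preorder P] : Prop :=
  ∀ X : Set P, #X = κ → ∃ Y ⊆ X, #Y = κ ∧ ∀ a ∈ Y, ∀ b ∈ Y, Compat a b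

/-- The order type of the predecessors of an element of `o.ToType`. -/
noncomputable def ordIdx (o : Ordinal.{u}) : o.ToType → Ordinal.{u} :=
  @Ordinal.typein o.ToType (· < ·) isWellOrder_lt

lemma ordIdx_lt (o : Ordinal.{u}) (i : o.ToType) : ordIdx o i < o :=
  Ordinal.typein_lt_self i

lemma exists_compat_subset {κ : Cardinal.{u}} (hreg : κ.IsRegular)
    {P : Type u} [PartialOrder P] (hP : IsKnaster κ P)
    {σ : Type u} (hσ : #σ = κ) (g : σ → P) :
    ∃ A : Set σ, #A = κ ∧ ∀ i ∈ A, ∀ j ∈ A, Compat (g i) (g j) := by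
  have hrange : #(Set.range g) ≤ κ := hσ ▸ Cardinal.mk_range_le
  rcases hrange.lt_or_eq with hlt | heq
  · obtain ⟨x, hx⟩ := Cardinal.infinite_pigeonhole_card
      (fun s => (⟨g s, Set.mem_range_self s⟩ : Set.range g)) κ hσ.ge hreg.aleph0_le
      (by rwa [hreg.cof_eq])
    refine ⟨_, le_antisymm ((Cardinal.mk_set_le _).trans hσ.le) hx, ?_⟩
    intro i hi j hj
    have hi' : g i = (x : P) := congrArg Subtype.val hi
    have hj' : g j = (x : P) := congrArg Subtype.val hj
    exact ⟨g i, le_refl _, by rw [hi', hj']⟩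
  · obtain ⟨Y, hYsub, hYcard, hYcompat⟩ := hP _ heq
    refine ⟨g ⁻¹' Y, ?_, fun i hi j hj => hYcompat _ hi _ hj⟩
    refine le_antisymm ((Cardinal.mk_set_le _).trans hσ.le) ?_
    have hsub : Y ⊆ g '' (g ⁻¹' Y) := by
      intro y hy
      obtain ⟨x, rfl⟩ := hYsub hy
      exact ⟨x, hy, rfl⟩
    calc κ = #Y := hYcard.symm
      _ ≤ #(g '' (g ⁻¹' Y)) := Cardinal.mk_le_mk_of_subset hsub
      _ ≤ #(g ⁻¹' Y) := Cardinal.mk_image_le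

/-- Any κ-sized subset of `κ.ord.ToType` is unbounded. -/
lemma unbounded_of_mk_eq {κ : Cardinal.{u}} (hreg : κ.IsRegular)
    (B : Set κ.ord.ToType) (hB : #B = κ) {β : Ordinal.{u}} (hβ : β < κ.ord) :
    ∃ i ∈ B, β ≤ ordIdx κ.ord i := by
  by_contra h
  push_neg at h
  have hβ' : β < @Ordinal.type κ.ord.ToType (· < ·) isWellOrder_lt := by
    rw [Ordinal.type_toType]; exact hβ
  set i₀ : κ.ord.ToType :=
    @Ordinal.enum κ.ord.ToType (· < ·) isWellOrder_lt ⟨β, hβ'⟩ with hi₀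
  have hti : ordIdx κ.ord i₀ = β :=
    @Ordinal.typein_enum κ.ord.ToType (· < ·) isWellOrder_lt β hβ'
  have hsub : B ⊆ {j | j < i₀} := by
    intro j hj
    have h1 := h j hj
    rw [← hti] at h1
    exact (@Ordinal.typein_lt_typein κ.ord.ToType (· < ·) isWellOrder_lt j i₀).1 h1
  have h2 : #B ≤ #{j | j < i₀} := Cardinal.mk_le_mk_of_subset hsub
  have h3 : #{j | j < i₀} = β.card := by
    have := @Ordinal.card_typein κ.ord.ToType (· < ·) isWellOrder_lt i₀
    rw [show @Ordinal.typein κ.ord.ToType (· < ·) isWellOrder_lt i₀ = ordIdx κ.ord i₀ from rfl,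
      hti] at this
    exact this.symm
  rw [hB, h3] at h2
  exact absurd (Cardinal.lt_ord.1 hβ) h2.not_gt

/-- A tree of height κ: a partial order in which the set of predecessors of
every node is well-ordered (witnessed by the level function `lvl`), with levels
indexed by the ordinals below κ (no smallness requirement on levels). -/
structure TreeOfHeight (κ : Cardinal.{u}) where
  carrier : Type u
  po : PartialOrder carrier
  lvl : carrier → Ordinal.{u}
  lvl_lt : ∀ t, lvl t < κ.ord
  lvl_strictMono : ∀ s t, po.lt s t → lvl s < lvl t
  preds : ∀ t, ∀ β < lvl t, ∃! s, po.lt s t ∧ lvl s = β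
  levels_nonempty : ∀ β < κ.ord, ∃ t, lvl t = β

/-- A cofinal branch: a chain of the tree meeting every level. -/
def IsCofBranch {κ : Cardinal.{u}} (S : TreeOfHeight κ) (b : Set S.carrier) : Prop :=
  (∀ s ∈ b, ∀ t ∈ b, S.po.le s t ∨ S.po.le t s) ∧ ∀ β < κ.ord, ∃ t ∈ b, S.lvl t = β

/-- A `P`-name for a cofinal branch of the tree `S`: `F p t` states that the
condition `p` forces `t` to belong to the named branch. -/
structure BranchName (P : Type u) [Preorder P] {κ : Cardinal.{u}} (S : TreeOfHeight κ) where
  F : P → S.carrier → Prop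
  mono : ∀ p q t, p ≤ q → F q t → F p t
  forcesChain : ∀ p s t, F p s → F p t → S.po.le s t ∨ S.po.le t s
  cof : ∀ p : P, ∀ β < κ.ord, ∃ q, q ≤ p ∧ ∃ t, S.lvl t = β ∧ F q t

lemma tree_comp_aux {κ : Cardinal.{u}} (S : TreeOfHeight κ) {s s' t : S.carrier}
    (hs : S.po.lt s t) (hs' : S.po.lt s' t) (h : S.lvl s ≤ S.lvl s') : S.po.le s s' := by
  letI := S.po
  obtain ⟨w, _, hwu⟩ := S.preds t (S.lvl s) (S.lvl_strictMono s t hs)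
  have h2 : s = w := hwu s ⟨hs, rfl⟩
  rcases h.lt_or_eq with h | h
  · obtain ⟨u, hu1, hu2⟩ := (S.preds s' (S.lvl s) h).exists
    have h1 : u = w := hwu u ⟨lt_trans hu1 hs', hu2⟩
    have : s = u := h2.trans h1.symm
    rw [this]
    exact le_of_lt hu1
  · have h1 : s' = w := hwu s' ⟨hs', h.symm⟩
    exact le_of_eq (h2.trans h1.symm)

lemma tree_comparable {κ : Cardinal.{u}} (S : TreeOfHeight κ) {s s' t : S.carrier}
    (hs : S.po.le s t) (hs' : S.po.le s' t) : S.po.le s s' ∨ S.po.le s' s := by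
  letI := S.po
  rcases eq_or_lt_of_le hs with rfl | hs
  · exact Or.inr hs'
  rcases eq_or_lt_of_le hs' with rfl | hs'
  · exact Or.inl hs.le
  rcases le_total (S.lvl s) (S.lvl s') with h | h
  · exact Or.inl (tree_comp_aux S hs hs' h)
  · exact Or.inr (tree_comp_aux S hs' hs h)

/-- Baumgartner's branch lemma: a κ-Knaster forcing adds no new cofinal branch
to a tree of height κ: every cofinal branch of the tree in a `P`-generic
extension is in the ground model. -/
theorem knaster_no_new_branch {κ : Cardinal.{u}} (hreg : κ.IsRegular)
    {P : Type u} [PartialOrder P] (hP : IsKnaster κ P)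
    (S : TreeOfHeight κ) (N : BranchName P S) :
    ∀ p : P, ∃ q, q ≤ p ∧ ∃ b : Set S.carrier, IsCofBranch S b ∧
      ∀ r, r ≤ q → ∀ t, N.F r t → t ∈ b := by
  intro p
  by_contra hcon
  push_neg at hcon
  -- hcon : ∀ q, q ≤ p → ∀ b, IsCofBranch S b → ∃ r, r ≤ q ∧ ∃ t, N.F r t ∧ t ∉ b
  letI := S.po
  set ι := κ.ord.ToType with hι
  have hmkι : #ι = κ := by exact Cardinal.mk_ord_toType κ
  have hidx : ∀ i : ι, ordIdx κ.ord i < κ.ord := fun i => ordIdx_lt κ.ord i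
  -- choose conditions deciding a node at each level
  choose pf hpf tf htf hFf using fun i : ι => N.cof p _ (hidx i)
  -- extract a κ-sized pairwise compatible subfamily
  obtain ⟨A, hA, hAcompat⟩ := exists_compat_subset hreg hP hmkι pf
  -- the ground-model branch
  set b : Set S.carrier := {s | ∃ i ∈ A, S.po.le s (tf i)} with hb
  have htcomp : ∀ i ∈ A, ∀ j ∈ A, S.po.le (tf i) (tf j) ∨ S.po.le (tf j) (tf i) := by
    intro i hi j hj
    obtain ⟨c, hci, hcj⟩ := hAcompat i hi j hj
    exact N.forcesChain c _ _ (N.mono c (pf i) _ hci (hFf i)) (N.mono c (pf j) _ hcj (hFf j))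
  have hbranch : IsCofBranch S b := by
    constructor
    · rintro s ⟨i, hi, hsi⟩ s' ⟨j, hj, hsj⟩
      rcases htcomp i hi j hj with h | h
      · exact tree_comparable S (le_trans hsi h) hsj
      · exact tree_comparable S hsi (le_trans hsj h)
    · intro β hβ
      obtain ⟨i, hiA, hile⟩ := unbounded_of_mk_eq hreg A hA hβ
      rcases hile.lt_or_eq with hlt | heq
      · have hlt' : β < S.lvl (tf i) := by rw [htf i]; exact hlt
        obtain ⟨u, ⟨hu1, hu2⟩⟩ := (S.preds (tf i) β hlt').exists
        exact ⟨u, ⟨i, hiA, le_of_lt hu1⟩, hu2⟩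
      · exact ⟨tf i, ⟨i, hiA, le_refl _⟩, by rw [htf i, ← heq]⟩
  -- counterexamples below each condition in A
  choose rf hrf sf hFs hsb using fun i : ↥A => hcon (pf i) (hpf i) b hbranch
  have hmkA : #(↥A) = κ := hA
  obtain ⟨A', hA'card, hA'compat⟩ := exists_compat_subset hreg hP hmkA rf
  have hA'ne : A'.Nonempty := by
    rw [← Set.nonempty_coe_sort, ← Cardinal.mk_ne_zero_iff, hA'card]
    exact hreg.pos.ne'
  obtain ⟨i₀, hi₀⟩ := hA'ne
  -- find j ∈ A' above the level of the off-branch node sf i₀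
  have hs₀lt : S.lvl (sf i₀) < κ.ord := S.lvl_lt _
  have hsucc : Order.succ (S.lvl (sf i₀)) < κ.ord :=
    (Cardinal.isSuccLimit_ord hreg.aleph0_le).succ_lt hs₀lt
  have hval : #(Subtype.val '' A' : Set ι) = κ := by
    rw [Cardinal.mk_image_eq Subtype.val_injective]; exact hA'card
  obtain ⟨jι, hjι, hjle⟩ := unbounded_of_mk_eq hreg _ hval hsucc
  obtain ⟨j, hjA', hj'eq⟩ := hjι
  -- jι = ↑↑j
  have hjlvl : S.lvl (sf i₀) < ordIdx κ.ord (j : ι) := by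
    rw [hj'eq]
    exact lt_of_lt_of_le (Order.lt_succ _) hjle
  -- compatibility of the two counterexample conditions
  obtain ⟨c, hci, hcj⟩ := hA'compat i₀ hi₀ j hjA'
  have hFsi : N.F c (sf i₀) := N.mono c (rf i₀) _ hci (hFs i₀)
  have hFtj : N.F c (tf (j : ι)) :=
    N.mono c (pf (j : ι)) _ (le_trans hcj (hrf j)) (hFf (j : ι))
  rcases N.forcesChain c _ _ hFsi hFtj with h | h
  · exact hsb i₀ ⟨(j : ι), j.2, h⟩
  · rcases eq_or_lt_of_le h with heq | hlt
    · rw [← heq, htf] at hjlvl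
      exact absurd rfl hjlvl.ne'
    · have := S.lvl_strictMono _ _ hlt
      rw [htf] at this
      exact absurd (lt_trans hjlvl this) (lt_irrefl _)
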